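/- Let ε ∈ (0,1), α ∈ (0,1), and let τ be the CSM stopping time τ = inf{n : (n+1)·b(n,α,S_n) ≤ ε} with S_n a sum of i.i.d. Bernoulli(α) variables. Then ℙ_α(τ < ∞) ≤ ε. -/

import Mathlib

open MeasureTheory ProbabilityTheory

/-- The binomial probability mass function `b(n,p,x) = C(n,x) p^x (1-p)^(n-x)`. -/
noncomputable def binomPMF (n : ℕ) (p : ℝ) (x : ℕ) : ℝ :=
  (n.choose x : ℝ) * p ^ x * (1 - p) ^ (n - x)

namespace Stmt18

open scoped Classical

def wt {n : ℕ} (v : Fin n → Bool) : ℕ := ∑ i, if v i then 1 else 0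

lemma wt_le {n : ℕ} (v : Fin n → Bool) : wt v ≤ n := by
  calc wt v ≤ ∑ _i : Fin n, 1 := Finset.sum_le_sum (by intro i _; split <;> simp)
  _ = n := by simp

lemma wt_snoc {n : ℕ} (v : Fin n → Bool) (b : Bool) :
    wt (Fin.snoc v b) = wt v + (if b then 1 else 0) := by
  unfold wt
  rw [Fin.sum_univ_castSucc]
  simp [Fin.snoc_castSucc, Fin.snoc_last]

noncomputable def qR (n w : ℕ) : ℝ := (((n : ℝ) + 1) * (n.choose w : ℝ))⁻¹

lemma choose_nat_A {n w : ℕ} (hw : w ≤ n) :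
    (n + 1 - w) * (n+1).choose w = (n + 1) * n.choose w := by
  have h := Nat.add_one_mul_choose_eq n (n - w)
  have hs1 : n.choose (n - w) = n.choose w := Nat.choose_symm hw
  have hs2 : (n+1).choose (n + 1 - w) = (n+1).choose w := Nat.choose_symm (by omega)
  have hrw : n - w + 1 = n + 1 - w := by omega
  rw [hs1, hrw, hs2] at h
  simpa [Nat.succ_eq_add_one, Nat.mul_comm] using h.symm

lemma choose_nat_B (n w : ℕ) :
    (w + 1) * (n+1).choose (w+1) = (n + 1) * n.choose w := by
  have h := Nat.add_one_mul_choose_eq n w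
  simpa [Nat.succ_eq_add_one, Nat.mul_comm] using h.symm

lemma qR_nonneg (n w : ℕ) : 0 ≤ qR n w := by unfold qR; positivity

lemma qR_consistency {n w : ℕ} (hw : w ≤ n) :
    qR (n+1) w + qR (n+1) (w+1) = qR n w := by
  have hc : 0 < (n.choose w : ℝ) := by exact_mod_cast Nat.choose_pos hw
  have hnw : (0:ℝ) < (n:ℝ) + 1 - w := by
    have : (w:ℝ) ≤ n := by exact_mod_cast hw
    linarith
  have hw1 : (0:ℝ) < (w:ℝ) + 1 := by positivity
  have ha : (((n+1).choose w : ℕ) : ℝ) = ((n:ℝ)+1) * (n.choose w : ℝ) / ((n:ℝ)+1-(w:ℝ)) := by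
    have := choose_nat_A hw
    have h' : ((n + 1 - w : ℕ) : ℝ) * ((n+1).choose w : ℝ) = ((n:ℝ) + 1) * (n.choose w : ℝ) := by
      exact_mod_cast this
    rw [Nat.cast_sub (by omega : w ≤ n + 1)] at h'
    push_cast at h' ⊢
    field_simp
    linarith [h']
  have hb : (((n+1).choose (w+1) : ℕ) : ℝ) = ((n:ℝ)+1) * (n.choose w : ℝ) / ((w:ℝ)+1) := by
    have := choose_nat_B n w
    have h' : ((w:ℝ) + 1) * ((n+1).choose (w+1) : ℝ) = ((n:ℝ) + 1) * (n.choose w : ℝ) := by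
      exact_mod_cast this
    field_simp
    linarith [h']
  unfold qR
  push_cast
  rw [ha, hb]
  have hn1 : (0:ℝ) < (n:ℝ) + 1 := by positivity
  field_simp
  ring


variable (α ε : ℝ)

def Cond (n s : ℕ) : Prop := ((n : ℝ) + 1) * binomPMF n α s ≤ ε

/-- vectors stopping exactly at time n -/
noncomputable def goodF (n : ℕ) : Finset (Fin n → Bool) :=
  Finset.univ.filter (fun v => Cond α ε n (wt v) ∧
    ∀ m, (h : m < n) → ¬ Cond α ε m (wt (v ∘ Fin.castLE h.le)))

/-- vectors not stopped up to time N -/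
noncomputable def nsF (N : ℕ) : Finset (Fin N → Bool) :=
  Finset.univ.filter (fun v => ∀ m, (h : m ≤ N) → ¬ Cond α ε m (wt (v ∘ Fin.castLE h)))

noncomputable def G (n : ℕ) : ℝ := ∑ v ∈ goodF α ε n, qR n (wt v)
noncomputable def R (N : ℕ) : ℝ := ∑ v ∈ nsF α ε N, qR N (wt v)

lemma comp_castLE_self {n : ℕ} (v : Fin n → Bool) : v ∘ Fin.castLE (le_refl n) = v := by
  funext i; simp [Fin.castLE]

lemma init_comp_castLE {N : ℕ} (v : Fin (N+1) → Bool) {m : ℕ} (h : m ≤ N) :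
    (Fin.init v) ∘ Fin.castLE h = v ∘ Fin.castLE (by omega : m ≤ N + 1) := by
  funext i
  simp only [Function.comp_apply, Fin.init]
  congr 1

lemma mem_A_iff (N : ℕ) (v : Fin (N+1) → Bool) :
    Fin.init v ∈ nsF α ε N ↔ (v ∈ goodF α ε (N+1) ∨ v ∈ nsF α ε (N+1)) := by
  simp only [nsF, goodF, Finset.mem_filter, Finset.mem_univ, true_and]
  constructor
  · intro hns
    by_cases hc : Cond α ε (N+1) (wt v)
    · left
      refine ⟨hc, fun m h => ?_⟩
      have := hns m (by omega)
      rwa [init_comp_castLE] at this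
    · right
      intro m h
      rcases Nat.lt_or_ge m (N+1) with h' | h'
      · have := hns m (by omega)
        rwa [init_comp_castLE] at this
      · have hm : m = N + 1 := by omega
        subst hm
        rwa [comp_castLE_self]
  · intro hv m h
    rw [init_comp_castLE]
    rcases hv with ⟨_, hmin⟩ | hns
    · exact hmin m (by omega)
    · exact hns m (by omega)

lemma disj_good_ns (N : ℕ) : Disjoint (goodF α ε (N+1)) (nsF α ε (N+1)) := by
  rw [Finset.disjoint_left]
  intro v hg hn
  simp only [goodF, nsF, Finset.mem_filter, Finset.mem_univ, true_and] at hg hn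
  have := hn (N+1) (le_refl _)
  rw [comp_castLE_self] at this
  exact this hg.1

lemma wt_initX {N : ℕ} (v : Fin (N+1) → Bool) : wt v = wt (Fin.init v) + (if v (Fin.last N) then 1 else 0) := by
  conv_lhs => rw [← Fin.snoc_init_self v]
  rw [wt_snoc]

lemma step (N : ℕ) : G α ε (N+1) + R α ε (N+1) = R α ε N := by
  classical
  have hsum : G α ε (N+1) + R α ε (N+1)
      = ∑ v ∈ (goodF α ε (N+1)) ∪ (nsF α ε (N+1)), qR (N+1) (wt v) := by
    rw [Finset.sum_union (disj_good_ns α ε N)]; rfl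
  rw [hsum]
  have hset : (goodF α ε (N+1)) ∪ (nsF α ε (N+1))
      = Finset.univ.filter (fun v : Fin (N+1) → Bool => Fin.init v ∈ nsF α ε N) := by
    ext v
    simp only [Finset.mem_union, Finset.mem_filter, Finset.mem_univ, true_and]
    exact (mem_A_iff α ε N v).symm
  rw [hset]
  -- reindex by (init, last)
  have hbij : ∑ v ∈ Finset.univ.filter (fun v : Fin (N+1) → Bool => Fin.init v ∈ nsF α ε N),
        qR (N+1) (wt v)
      = ∑ p ∈ (nsF α ε N) ×ˢ (Finset.univ : Finset Bool), qR (N+1) (wt (Fin.snoc p.1 p.2)) := by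
    refine Finset.sum_nbij' (fun v => (Fin.init v, v (Fin.last N))) (fun p => Fin.snoc p.1 p.2) ?_ ?_ ?_ ?_ ?_
    · intro v hv
      simp only [Finset.mem_filter, Finset.mem_univ, true_and] at hv
      simp [Finset.mem_product, hv]
    · intro p hp
      simp only [Finset.mem_product, Finset.mem_univ, and_true] at hp
      simp [Finset.mem_filter, Fin.init_snoc, hp]
    · intro v _; exact Fin.snoc_init_self v
    · intro p _; simp [Fin.init_snoc, Fin.snoc_last]
    · intro v _
      rw [Fin.snoc_init_self]
  rw [hbij, Finset.sum_product]
  unfold R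
  apply Finset.sum_congr rfl
  intro u hu
  rw [Fintype.sum_bool]
  rw [wt_snoc, wt_snoc]
  simp only [if_true, if_false]
  rw [add_comm (qR (N+1) (wt u + 1))]
  exact qR_consistency (wt_le u)

lemma wt_zero (v : Fin 0 → Bool) : wt v = 0 := by simp [wt]

lemma cond_zero_false (hε : ε < 1) : ¬ Cond α ε 0 0 := by
  unfold Cond binomPMF
  intro h
  norm_num at h
  linarith

lemma goodF_zero (hε : ε < 1) : goodF α ε 0 = ∅ := by
  ext v
  simp only [goodF, Finset.mem_filter, Finset.mem_univ, true_and, Finset.notMem_empty, iff_false]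
  rintro ⟨hc, -⟩
  rw [wt_zero] at hc
  exact cond_zero_false α ε hε hc

lemma R_zero (hε : ε < 1) : R α ε 0 = 1 := by
  have hns : nsF α ε 0 = Finset.univ := by
    ext v
    simp only [nsF, Finset.mem_filter, Finset.mem_univ, true_and, iff_true]
    intro m h
    interval_cases m
    rw [wt_zero]
    exact cond_zero_false α ε hε
  unfold R
  rw [hns]
  rw [Finset.sum_eq_single (fun i => i.elim0)]
  · simp [qR, wt_zero]
  · intro v _ hv
    exact absurd (funext fun i => i.elim0) hv
  · intro h
    exact absurd (Finset.mem_univ _) h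

lemma invariant (hε : ε < 1) (N : ℕ) :
    (∑ n ∈ Finset.range (N+1), G α ε n) + R α ε N = 1 := by
  induction N with
  | zero =>
    rw [Finset.sum_range_one, R_zero α ε hε]
    unfold G
    rw [goodF_zero α ε hε]
    simp
  | succ N ih =>
    rw [Finset.sum_range_succ, add_assoc, step α ε N, ih]

lemma G_nonneg (n : ℕ) : 0 ≤ G α ε n :=
  Finset.sum_nonneg fun v _ => qR_nonneg _ _

lemma R_nonneg (N : ℕ) : 0 ≤ R α ε N :=
  Finset.sum_nonneg fun v _ => qR_nonneg _ _

lemma G_sum_le_one (hε : ε < 1) (s : Finset ℕ) : ∑ n ∈ s, G α ε n ≤ 1 := by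
  obtain ⟨N, hN⟩ : ∃ N, s ⊆ Finset.range (N+1) := by
    refine ⟨s.sup id, fun n hn => Finset.mem_range.2 ?_⟩
    exact Nat.lt_succ_of_le (Finset.le_sup (f := id) hn)
  calc ∑ n ∈ s, G α ε n ≤ ∑ n ∈ Finset.range (N+1), G α ε n :=
        Finset.sum_le_sum_of_subset_of_nonneg hN (fun n _ _ => G_nonneg α ε n)
    _ ≤ 1 := by
        have := invariant α ε hε N
        have := R_nonneg α ε N
        linarith


lemma atom_bound_real (hα0 : 0 < α) (hα1 : α < 1) {n w : ℕ} (hw : w ≤ n)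
    (hc : Cond α ε n w) :
    α ^ w * (1 - α) ^ (n - w) ≤ ε * qR n w := by
  have hC : (0:ℝ) < (n.choose w : ℝ) := by exact_mod_cast Nat.choose_pos hw
  have hD : (0:ℝ) < ((n:ℝ) + 1) * (n.choose w : ℝ) := by positivity
  unfold Cond binomPMF at hc
  have h1 : ((n:ℝ)+1) * ((n.choose w : ℝ) * (α ^ w * (1 - α) ^ (n - w))) ≤ ε := by
    linarith [hc]
  unfold qR
  calc α ^ w * (1 - α) ^ (n - w)
      = (((n:ℝ)+1) * ((n.choose w : ℝ) * (α ^ w * (1 - α) ^ (n - w)))) / (((n:ℝ)+1) * (n.choose w : ℝ)) := by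
        field_simp
    _ ≤ ε / (((n:ℝ)+1) * (n.choose w : ℝ)) := by
        gcongr
    _ = ε * (((n:ℝ)+1) * (n.choose w : ℝ))⁻¹ := by rw [div_eq_mul_inv]

end Stmt18

open Stmt18

/-- At the threshold `p = α`, the CSM stopping time
`τ = inf{n : (n+1) b(n,α,S_n) ≤ ε}` satisfies `ℙ_α(τ < ∞) ≤ ε`. -/
theorem stmt18
    (Ω : Type*) [MeasureSpace Ω] [IsProbabilityMeasure (ℙ : Measure Ω)]
    (α ε : ℝ) (hα : α ∈ Set.Ioo (0:ℝ) 1) (hε : ε ∈ Set.Ioo (0:ℝ) 1)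
    (X : ℕ → Ω → ℕ)
    (hmeas : ∀ i, Measurable (X i))
    (hindep : iIndepFun X ℙ)
    (hval : ∀ i ω, X i ω ≤ 1)
    (hdist : ∀ i, ℙ {ω | X i ω = 1} = ENNReal.ofReal α) :
    ℙ {ω | ∃ n : ℕ, 1 ≤ n ∧
        ((n : ℝ) + 1) * binomPMF n α (∑ i ∈ Finset.range n, X i ω) ≤ ε}
      ≤ ENNReal.ofReal ε := by
  classical
  obtain ⟨hα0, hα1⟩ := hα
  obtain ⟨hε0, hε1⟩ := hε
  set bex : ∀ n : ℕ, (Fin n → Bool) → ℕ → ℕ :=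
    fun n v i => if h : i < n then (if v ⟨i, h⟩ then 1 else 0) else 0 with hbexdef
  set atom : ∀ n : ℕ, (Fin n → Bool) → Set Ω :=
    fun n v => ⋂ i ∈ Finset.range n, X i ⁻¹' {bex n v i} with hatomdef
  -- single-coordinate probabilities
  have hP1 : ∀ i, ℙ (X i ⁻¹' {1}) = ENNReal.ofReal α := by
    intro i
    have : X i ⁻¹' {1} = {ω | X i ω = 1} := by ext ω; simp
    rw [this, hdist i]
  have hP0 : ∀ i, ℙ (X i ⁻¹' {0}) = ENNReal.ofReal (1 - α) := by
    intro i
    have hcompl : X i ⁻¹' {0} = (X i ⁻¹' {1})ᶜ := by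
      ext ω
      have := hval i ω
      simp only [Set.mem_preimage, Set.mem_singleton_iff, Set.mem_compl_iff]
      omega
    rw [hcompl, measure_compl ((hmeas i) (measurableSet_singleton 1)) (measure_ne_top _ _),
      hP1, measure_univ, ← ENNReal.ofReal_one, ← ENNReal.ofReal_sub _ hα0.le]
  -- atom probability
  have hatomP : ∀ (n : ℕ) (v : Fin n → Bool),
      ℙ (atom n v) = ENNReal.ofReal α ^ (wt v) * ENNReal.ofReal (1 - α) ^ (n - wt v) := by
    intro n v
    have hind := hindep.measure_inter_preimage_eq_mul (Finset.range n)
      (sets := fun i => {bex n v i}) (fun i _ => measurableSet_singleton _)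
    rw [hatomdef]
    simp only []
    rw [hind]
    have hep : ∀ i : Fin n, ℙ (X (i : ℕ) ⁻¹' {bex n v (i : ℕ)})
        = (if v i then ENNReal.ofReal α else ENNReal.ofReal (1 - α)) := by
      intro i
      have hb : bex n v (i : ℕ) = if v i then 1 else 0 := by
        rw [hbexdef]
        simp only [Fin.is_lt, dif_pos, Fin.eta]
      rw [hb]
      split
      · exact hP1 i
      · exact hP0 i
    rw [← Fin.prod_univ_eq_prod_range (fun i => ℙ (X i ⁻¹' {bex n v i})) n]
    rw [Finset.prod_congr rfl (fun i _ => hep i)]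
    rw [Finset.prod_ite (fun _ => ENNReal.ofReal α) (fun _ => ENNReal.ofReal (1 - α)),
      Finset.prod_const, Finset.prod_const]
    have hw : (Finset.univ.filter (fun i : Fin n => v i = true)).card = wt v := by
      simp [wt, Finset.sum_boole]
    have hw2 : (Finset.univ.filter (fun i : Fin n => ¬ (v i = true))).card = n - wt v := by
      have h := Finset.card_filter_add_card_filter_not
        (s := (Finset.univ : Finset (Fin n))) (p := fun i => v i = true)
      simp only [Finset.card_univ, Fintype.card_fin] at h
      omega
    rw [hw, hw2]
  -- atom probability bound for good vectors
  have hatomPle : ∀ (n : ℕ) (v : Fin n → Bool), v ∈ goodF α ε n →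
      ℙ (atom n v) ≤ ENNReal.ofReal (ε * qR n (wt v)) := by
    intro n v hv
    rw [hatomP n v]
    rw [← ENNReal.ofReal_pow hα0.le, ← ENNReal.ofReal_pow (by linarith : (0:ℝ) ≤ 1 - α),
      ← ENNReal.ofReal_mul (by positivity)]
    apply ENNReal.ofReal_le_ofReal
    simp only [goodF, Finset.mem_filter, Finset.mem_univ, true_and] at hv
    exact atom_bound_real α ε hα0 hα1 (wt_le v) hv.1
  -- event inclusion
  have hincl : {ω | ∃ n : ℕ, 1 ≤ n ∧
        ((n : ℝ) + 1) * binomPMF n α (∑ i ∈ Finset.range n, X i ω) ≤ ε}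
      ⊆ ⋃ n : ℕ, ⋃ v ∈ goodF α ε n, atom n v := by
    intro ω hω
    obtain ⟨n, -, hcondn⟩ := hω
    have hP : ∃ k, Cond α ε k (∑ i ∈ Finset.range k, X i ω) := ⟨n, hcondn⟩
    set n₀ := Nat.find hP with hn₀def
    have hn₀ := Nat.find_spec hP
    have hmin : ∀ m, m < n₀ → ¬ Cond α ε m (∑ i ∈ Finset.range m, X i ω) :=
      fun m hm => Nat.find_min hP hm
    set v : Fin n₀ → Bool := fun i => decide (X (i : ℕ) ω = 1) with hvdef
    have hXv : ∀ i : ℕ, ∀ h : i < n₀, X i ω = if v ⟨i, h⟩ then 1 else 0 := by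
      intro i h
      have := hval i ω
      rw [hvdef]
      simp only []
      rcases Nat.lt_or_ge (X i ω) 1 with h1 | h1
      · have : X i ω = 0 := by omega
        simp [this]
      · have : X i ω = 1 := by omega
        simp [this]
    have wS : ∀ m : ℕ, ∀ h : m ≤ n₀, wt (v ∘ Fin.castLE h) = ∑ i ∈ Finset.range m, X i ω := by
      intro m h
      unfold wt
      rw [← Fin.sum_univ_eq_sum_range (fun i => X i ω) m]
      apply Finset.sum_congr rfl
      intro i _
      rw [hXv (i : ℕ) (by omega)]
      rfl
    have hvg : v ∈ goodF α ε n₀ := by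
      simp only [goodF, Finset.mem_filter, Finset.mem_univ, true_and]
      constructor
      · have := wS n₀ (le_refl _)
        rw [comp_castLE_self] at this
        rw [this]
        exact hn₀
      · intro m h hc
        rw [wS m h.le] at hc
        exact hmin m h hc
    refine Set.mem_iUnion.2 ⟨n₀, Set.mem_iUnion₂.2 ⟨v, hvg, ?_⟩⟩
    rw [hatomdef]
    simp only [Set.mem_iInter, Set.mem_preimage, Set.mem_singleton_iff]
    intro i hi
    rw [Finset.mem_range] at hi
    rw [hbexdef]
    simp only [hi, dif_pos]
    exact hXv i hi
  -- assembly
  calc ℙ {ω | ∃ n : ℕ, 1 ≤ n ∧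
        ((n : ℝ) + 1) * binomPMF n α (∑ i ∈ Finset.range n, X i ω) ≤ ε}
      ≤ ℙ (⋃ n : ℕ, ⋃ v ∈ goodF α ε n, atom n v) := measure_mono hincl
    _ ≤ ∑' n : ℕ, ℙ (⋃ v ∈ goodF α ε n, atom n v) := measure_iUnion_le _
    _ ≤ ∑' n : ℕ, ENNReal.ofReal (ε * G α ε n) := by
        apply ENNReal.tsum_le_tsum
        intro n
        calc ℙ (⋃ v ∈ goodF α ε n, atom n v)
            ≤ ∑ v ∈ goodF α ε n, ℙ (atom n v) := measure_biUnion_finset_le _ _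
          _ ≤ ∑ v ∈ goodF α ε n, ENNReal.ofReal (ε * qR n (wt v)) :=
              Finset.sum_le_sum (fun v hv => hatomPle n v hv)
          _ = ENNReal.ofReal (∑ v ∈ goodF α ε n, ε * qR n (wt v)) := by
              rw [ENNReal.ofReal_sum_of_nonneg]
              intro v _
              have := qR_nonneg n (wt v)
              positivity
          _ = ENNReal.ofReal (ε * G α ε n) := by
              rw [G, Finset.mul_sum]
    _ ≤ ENNReal.ofReal ε := by
        rw [ENNReal.tsum_eq_iSup_sum]
        apply iSup_le
        intro s
        rw [← ENNReal.ofReal_sum_of_nonneg (fun n _ => by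
          have := G_nonneg α ε n; positivity)]
        apply ENNReal.ofReal_le_ofReal
        calc ∑ n ∈ s, ε * G α ε n = ε * ∑ n ∈ s, G α ε n := by rw [Finset.mul_sum]
          _ ≤ ε * 1 := by
              apply mul_le_mul_of_nonneg_left (G_sum_le_one α ε hε1 s) hε0.le
          _ = ε := mul_one ε
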